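/- For every real a ≥ 1, the Chebyshev polynomial of the first kind satisfies T_{⌈a⌉}(1 + 1/a²) ≥ 2. -/

import Mathlib

open Real

lemma T_real_cosh (n : ℤ) (t : ℝ) :
    (Polynomial.Chebyshev.T ℝ n).eval (Real.cosh t) = Real.cosh (n * t) := by
  have h := Polynomial.Chebyshev.T_complex_cos (t * Complex.I) n
  rw [Complex.cos_mul_I] at h
  rw [show (n : ℂ) * (t * Complex.I) = ((n * t : ℝ) : ℂ) * Complex.I by push_cast; ring,
    Complex.cos_mul_I] at h
  exact_mod_cast h

lemma sinh_le_mul_cosh {x : ℝ} (hx : 0 ≤ x) : Real.sinh x ≤ x * Real.cosh x := by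
  have hmono : Monotone (fun z : ℝ => z * Real.cosh z - Real.sinh z) := by
    apply monotone_of_deriv_nonneg
    · exact (differentiable_id.mul Real.differentiable_cosh).sub Real.differentiable_sinh
    · intro y
      have hd : HasDerivAt (fun z : ℝ => z * Real.cosh z - Real.sinh z)
          (1 * Real.cosh y + y * Real.sinh y - Real.cosh y) y := by
        exact ((hasDerivAt_id' y).mul (Real.hasDerivAt_cosh y)).sub (Real.hasDerivAt_sinh y)
      rw [hd.deriv]
      have hy : 0 ≤ y * Real.sinh y := by
        rcases le_or_gt 0 y with h | h
        · exact mul_nonneg h (Real.sinh_nonneg_iff.mpr h)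
        · have := Real.sinh_nonpos_iff.mpr h.le
          nlinarith
      nlinarith
  have := hmono hx
  simpa using this

lemma cosh_two_arsinh (b : ℝ) (hb : 0 < b) :
    (1 : ℝ) + 1 / b ^ 2 = Real.cosh (2 * Real.arsinh (1 / (Real.sqrt 2 * b))) := by
  have h2 : Real.sqrt 2 ^ 2 = 2 := Real.sq_sqrt (by norm_num)
  rw [Real.cosh_two_mul, Real.cosh_sq, Real.sinh_arsinh]
  have h3 : (1 / (Real.sqrt 2 * b)) ^ 2 = 1 / (2 * b ^ 2) := by
    rw [div_pow, mul_pow, h2, one_pow]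
  rw [h3]; field_simp; ring

lemma sinh_twothirds : (9044/12717 : ℝ) ≤ Real.sinh (2/3) := by
  have hexp : (157/81 : ℝ) ≤ Real.exp (2/3) := by
    have h := Real.sum_le_exp_of_nonneg (by norm_num : (0:ℝ) ≤ 2/3) 4
    simp [Finset.sum_range_succ, Nat.factorial] at h
    norm_num at h
    linarith
  have hpos : (0:ℝ) < Real.exp (2/3) := Real.exp_pos _
  have hexp2 : Real.exp (-(2/3 : ℝ)) ≤ 81/157 := by
    rw [Real.exp_neg]
    rw [inv_le_comm₀ (by positivity) (by norm_num)]
    linarith [hexp]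
  rw [Real.sinh_eq]
  linarith

theorem chebyshev_ceil_ge_two (a : ℝ) (ha : 1 ≤ a) :
    2 ≤ (Polynomial.Chebyshev.T ℝ ⌈a⌉).eval (1 + 1 / a ^ 2) := by
  have ha0 : 0 < a := lt_of_lt_of_le one_pos ha
  set n : ℤ := ⌈a⌉ with hn
  have han : a ≤ (n : ℝ) := Int.le_ceil a
  have hn1 : (1 : ℤ) ≤ n := by
    have : (1:ℝ) ≤ (n:ℝ) := le_trans ha han
    exact_mod_cast this
  rcases eq_or_lt_of_le hn1 with h1 | h2
  · -- n = 1, hence a = 1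
    have ha1 : a = 1 := by
      have : a ≤ ((1:ℤ) : ℝ) := by
        apply Int.ceil_le.mp
        rw [← hn, ← h1]
      exact le_antisymm (by exact_mod_cast this) ha
    rw [← h1, ha1]
    simp [Polynomial.Chebyshev.T_one]
    norm_num
  · -- n ≥ 2
    have hn2 : (2 : ℝ) ≤ (n : ℝ) := by exact_mod_cast h2
    have hs2 : (0:ℝ) < Real.sqrt 2 := by positivity
    have hnpos : (0:ℝ) < (n:ℝ) := by linarith
    set sa := Real.arsinh (1 / (Real.sqrt 2 * a)) with hsa
    set sn := Real.arsinh (1 / (Real.sqrt 2 * (n:ℝ))) with hsn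
    have hsnn : 0 ≤ sn := Real.arsinh_nonneg_iff.mpr (by positivity)
    have hsan : sn ≤ sa := by
      rw [hsa, hsn, Real.arsinh_le_arsinh]
      gcongr
    rw [cosh_two_arsinh a ha0, T_real_cosh]
    -- key bound : 2/3 ≤ n * sn
    have hsinh : Real.sinh sn = 1 / (Real.sqrt 2 * (n:ℝ)) := Real.sinh_arsinh _
    have hcosh_sq : Real.cosh sn ^ 2 = 1 / (2 * (n:ℝ) ^ 2) + 1 := by
      rw [Real.cosh_sq, hsinh, div_pow, mul_pow, Real.sq_sqrt (by norm_num : (0:ℝ) ≤ 2), one_pow]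
    have hcosh_le : Real.cosh sn ≤ 3 / (2 * Real.sqrt 2) := by
      have h98 : Real.cosh sn ^ 2 ≤ 9/8 := by
        rw [hcosh_sq]
        have : (1:ℝ) / (2 * (n:ℝ)^2) ≤ 1/8 :=
          one_div_le_one_div_of_le (by norm_num) (by nlinarith)
        linarith
      have hsq2 : Real.sqrt 2 ^ 2 = 2 := Real.sq_sqrt (by norm_num)
      have hX : (2 * Real.sqrt 2 * Real.cosh sn) ^ 2 ≤ 9 := by nlinarith [Real.cosh_pos sn]
      have hX2 : 2 * Real.sqrt 2 * Real.cosh sn ≤ 3 := by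
        nlinarith [Real.cosh_pos sn, hs2]
      rw [le_div_iff₀ (by positivity)]
      linarith
    have hkey : (2:ℝ)/3 ≤ (n:ℝ) * sn := by
      have h1' := sinh_le_mul_cosh hsnn
      rw [hsinh] at h1'
      have h2' : 1 / (Real.sqrt 2 * (n:ℝ)) ≤ sn * (3 / (2 * Real.sqrt 2)) := by
        calc 1 / (Real.sqrt 2 * (n:ℝ)) ≤ sn * Real.cosh sn := h1'
        _ ≤ sn * (3 / (2 * Real.sqrt 2)) := by
            apply mul_le_mul_of_nonneg_left hcosh_le hsnn
      have hsq : Real.sqrt 2 ^ 2 = 2 := Real.sq_sqrt (by norm_num)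
      -- from h2': 2/(3n) ≤ sn
      have : 2 / (3 * (n:ℝ)) ≤ sn := by
        have h3' := mul_le_mul_of_nonneg_left h2' (by positivity : (0:ℝ) ≤ 2 * Real.sqrt 2 / 3)
        have e1 : (2 * Real.sqrt 2 / 3) * (1 / (Real.sqrt 2 * (n:ℝ))) = 2 / (3 * (n:ℝ)) := by
          field_simp
        have e2 : (2 * Real.sqrt 2 / 3) * (sn * (3 / (2 * Real.sqrt 2))) = sn := by
          field_simp
        rw [e1, e2] at h3'
        exact h3'
      calc (2:ℝ)/3 = (n:ℝ) * (2 / (3 * (n:ℝ))) := by field_simp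
      _ ≤ (n:ℝ) * sn := by apply mul_le_mul_of_nonneg_left this (le_of_lt hnpos)
    -- conclude
    have hmono1 : Real.cosh (2 * (2/3 : ℝ)) ≤ Real.cosh ((n:ℝ) * (2 * sa)) := by
      rw [Real.cosh_le_cosh]
      have hsann : 0 ≤ sa := le_trans hsnn hsan
      rw [abs_of_nonneg (by norm_num), abs_of_nonneg (mul_nonneg hnpos.le (by linarith))]
      have hB : (n:ℝ) * (2 * sn) ≤ (n:ℝ) * (2 * sa) :=
        mul_le_mul_of_nonneg_left (by linarith) hnpos.le
      nlinarith [hkey]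
    have hfin : (2:ℝ) ≤ Real.cosh (2 * (2/3 : ℝ)) := by
      rw [Real.cosh_two_mul, Real.cosh_sq]
      nlinarith [sinh_twothirds, sq_nonneg (Real.sinh (2/3) - 9044/12717)]
    linarith
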